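/- arXiv:2409.13432 — 2 statements merged into one kernel-verified Lean document; each statement's English description precedes it below -/
import Mathlib

section
/- Let {A_n} and {B_n} be sequences of Hermitian d_n×d_n matrices with d_n → ∞, such that {A_n} has eigenvalue distribution given by a bounded measurable function f on a set D of positive finite measure, the spectral norms of A_n are uniformly bounded, and rank(B_n - A_n)/d_n → 0 with ||B_n - A_n|| uniformly bounded. Then {B_n} has the same eigenvalue distribution f. -/
open Matrix Filter MeasureTheory
open scoped Matrix.Norms.L2Operator

section Helpers
variable {n : Type*} [Fintype n] [DecidableEq n]

lemma l2norm_le (M : Matrix n n ℂ) {C : ℝ} (hC : 0 ≤ C)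
    (h : ∀ x : EuclideanSpace ℂ n, ‖(EuclideanSpace.equiv n ℂ).symm (M *ᵥ x)‖ ≤ C * ‖x‖) :
    ‖M‖ ≤ C := by
  rw [Matrix.l2_opNorm_def]
  exact ContinuousLinearMap.opNorm_le_bound _ hC h

lemma l2norm_diagonal_le (v : n → ℂ) {C : ℝ} (hC : 0 ≤ C) (h : ∀ i, ‖v i‖ ≤ C) :
    ‖(diagonal v : Matrix n n ℂ)‖ ≤ C := by
  apply l2norm_le _ hC
  intro x
  rw [EuclideanSpace.norm_eq, EuclideanSpace.norm_eq]
  rw [show (C * Real.sqrt (∑ i, ‖x i‖ ^ 2)) = Real.sqrt (C^2 * ∑ i, ‖x i‖ ^ 2) by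
    rw [Real.sqrt_mul (sq_nonneg C), Real.sqrt_sq hC]]
  apply Real.sqrt_le_sqrt
  rw [Finset.mul_sum]
  apply Finset.sum_le_sum
  intro i _
  have : ((EuclideanSpace.equiv n ℂ).symm (diagonal v *ᵥ x)) i = v i * x i := by
    simp [mulVec_diagonal]
  rw [this, norm_mul, mul_pow]
  apply mul_le_mul_of_nonneg_right _ (sq_nonneg _)
  exact pow_le_pow_left₀ (norm_nonneg _) (h i) 2

lemma norm_conj_unitary (U : Matrix.unitaryGroup n ℂ) (M : Matrix n n ℂ) :
    ‖(U : Matrix n n ℂ) * M * (star U : Matrix.unitaryGroup n ℂ)‖ = ‖M‖ := by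
  rw [mul_assoc, CStarRing.norm_coe_unitary_mul U (M * _), CStarRing.norm_mul_coe_unitary M (star U)]

lemma herm_norm_le {H : Matrix n n ℂ} (hH : H.IsHermitian) {C : ℝ} (hC : 0 ≤ C)
    (h : ∀ i, |hH.eigenvalues i| ≤ C) : ‖H‖ ≤ C := by
  conv_lhs => rw [hH.spectral_theorem, Unitary.conjStarAlgAut_apply]
  rw [show (star (hH.eigenvectorUnitary : Matrix n n ℂ)) =
    ((star hH.eigenvectorUnitary : Matrix.unitaryGroup n ℂ) : Matrix n n ℂ) from rfl]
  rw [norm_conj_unitary]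
  apply l2norm_diagonal_le _ hC
  intro i
  simpa using h i

lemma herm_eig_le_norm {H : Matrix n n ℂ} (hH : H.IsHermitian) (j : n) :
    |hH.eigenvalues j| ≤ ‖H‖ := by
  have h1 : ‖(EuclideanSpace.equiv n ℂ).symm (H *ᵥ ⇑(hH.eigenvectorBasis j))‖
      ≤ ‖H‖ * ‖hH.eigenvectorBasis j‖ := Matrix.l2_opNorm_mulVec H _
  rw [hH.eigenvectorBasis.orthonormal.1 j, mul_one] at h1
  calc |hH.eigenvalues j| = ‖hH.eigenvalues j • hH.eigenvectorBasis j‖ := by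
        rw [norm_smul, hH.eigenvectorBasis.orthonormal.1 j, mul_one, Real.norm_eq_abs]
    _ ≤ ‖H‖ := by
        rw [show hH.eigenvalues j • hH.eigenvectorBasis j
          = (EuclideanSpace.equiv n ℂ).symm (H *ᵥ ⇑(hH.eigenvectorBasis j)) from ?_]
        · exact h1
        · rw [show (EuclideanSpace.equiv n ℂ).symm (H *ᵥ ⇑(hH.eigenvectorBasis j))
              = (EuclideanSpace.equiv n ℂ).symm (hH.eigenvalues j • ⇑(hH.eigenvectorBasis j))
              from congrArg _ (hH.mulVec_eigenvectorBasis j)]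
          rfl


lemma entry_le_l2norm (M : Matrix n n ℂ) (j : n) : ‖M j j‖ ≤ ‖M‖ := by
  have h1 : ‖(EuclideanSpace.equiv n ℂ).symm (M *ᵥ (EuclideanSpace.single j (1:ℂ)))‖
      ≤ ‖M‖ * ‖EuclideanSpace.single j (1:ℂ)‖ := Matrix.l2_opNorm_mulVec M _
  rw [EuclideanSpace.norm_single, norm_one, mul_one] at h1
  refine le_trans ?_ h1
  set y := (EuclideanSpace.equiv n ℂ).symm (M *ᵥ (EuclideanSpace.single j (1:ℂ)))
  have hy : y j = M j j := by
    show (M *ᵥ (EuclideanSpace.single j (1:ℂ))) j = M j j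
    have h2 : (EuclideanSpace.single j (1:ℂ) : n → ℂ) = Pi.single j 1 := rfl
    rw [h2, mulVec_single]
    exact mul_one _
  rw [← hy, EuclideanSpace.norm_eq]
  rw [show ‖y j‖ = Real.sqrt (‖y j‖^2) from (Real.sqrt_sq (norm_nonneg _)).symm]
  apply Real.sqrt_le_sqrt
  exact Finset.single_le_sum (f := fun i => ‖y i‖^2) (fun i _ => sq_nonneg _) (Finset.mem_univ j)

lemma conj_pow_eq {R : Type*} [Ring R] (U D V H : R) (hst : H = U * D * V)
    (hVU : V * U = 1) (hUV : U * V = 1) (m : ℕ) : H ^ m = U * D ^ m * V := by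
  induction m with
  | zero => simp [hUV]
  | succ m ih =>
    rw [pow_succ, ih, hst, pow_succ]
    calc U * D ^ m * V * (U * D * V)
        = U * D ^ m * (V * U) * D * V := by noncomm_ring
      _ = U * D ^ m * 1 * D * V := by rw [hVU]
      _ = U * (D ^ m * D) * V := by noncomm_ring

lemma herm_trace_pow {H : Matrix n n ℂ} (hH : H.IsHermitian) (m : ℕ) :
    (H ^ m).trace = ∑ j, (hH.eigenvalues j : ℂ) ^ m := by
  have hU : (star (hH.eigenvectorUnitary : Matrix n n ℂ)) * (hH.eigenvectorUnitary : Matrix n n ℂ) = 1 :=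
    Unitary.coe_star_mul_self _
  rw [conj_pow_eq _ _ _ _ (hH.spectral_theorem.trans (Unitary.conjStarAlgAut_apply _ _)) hU (Unitary.coe_mul_star_self _) m, trace_mul_cycle, hU, one_mul,
    diagonal_pow, trace_diagonal]
  simp [Function.comp]

lemma trace_mul_herm_le {E : Matrix n n ℂ} (hE : E.IsHermitian) {C : ℝ}
    (h : ∀ i, |hE.eigenvalues i| ≤ C) (M : Matrix n n ℂ) :
    ‖(M * E).trace‖ ≤ (E.rank : ℝ) * C * ‖M‖ := by
  classical
  set W := (hE.eigenvectorUnitary : Matrix n n ℂ) with hW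
  set N := star W * M * W with hN
  have hNnorm : ‖N‖ ≤ ‖M‖ := by
    have hsW : star W = ((star hE.eigenvectorUnitary : Matrix.unitaryGroup n ℂ) : Matrix n n ℂ) := rfl
    rw [hN, mul_assoc, hsW, CStarRing.norm_coe_unitary_mul (star hE.eigenvectorUnitary) (M * W),
      CStarRing.norm_mul_coe_unitary M hE.eigenvectorUnitary]
  have htr : (M * E).trace = ∑ j, N j j * (hE.eigenvalues j : ℂ) := by
    conv_lhs => rw [hE.spectral_theorem, Unitary.conjStarAlgAut_apply]
    rw [show M * ((hE.eigenvectorUnitary : Matrix n n ℂ) * diagonal (RCLike.ofReal ∘ hE.eigenvalues)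
        * star (hE.eigenvectorUnitary : Matrix n n ℂ))
      = (M * W * diagonal (RCLike.ofReal ∘ hE.eigenvalues)) * star W from by
        rw [hW]; noncomm_ring]
    rw [trace_mul_comm, ← mul_assoc, ← mul_assoc, ← hN]
    rw [show N * diagonal (RCLike.ofReal ∘ hE.eigenvalues) = N * diagonal (fun j => (hE.eigenvalues j : ℂ)) from rfl]
    simp [Matrix.trace, Matrix.diag, mul_diagonal]
  rw [htr]
  calc ‖∑ j, N j j * (hE.eigenvalues j : ℂ)‖ ≤ ∑ j, ‖N j j * (hE.eigenvalues j : ℂ)‖ :=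
        norm_sum_le _ _
    _ = ∑ j, ‖N j j‖ * |hE.eigenvalues j| := by
        simp [norm_mul, Complex.norm_real]
    _ = ∑ j ∈ Finset.univ.filter (fun j => hE.eigenvalues j ≠ 0), ‖N j j‖ * |hE.eigenvalues j| := by
        rw [Finset.sum_filter_of_ne]
        intro x _ hx
        intro h0
        exact hx (by rw [h0]; simp)
    _ ≤ (Finset.univ.filter (fun j => hE.eigenvalues j ≠ 0)).card • (C * ‖M‖) := by
        apply Finset.sum_le_card_nsmul
        intro j _
        calc ‖N j j‖ * |hE.eigenvalues j| ≤ ‖M‖ * C := by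
              apply mul_le_mul (le_trans (entry_le_l2norm N j) hNnorm) (h j)
                (abs_nonneg _) (norm_nonneg _)
          _ = C * ‖M‖ := mul_comm _ _
    _ = (E.rank : ℝ) * C * ‖M‖ := by
        rw [hE.rank_eq_card_non_zero_eigs, Fintype.card_subtype]
        rw [nsmul_eq_mul, mul_assoc]

lemma pow_sub_pow_eq {R : Type*} [Ring R] (B A : R) (m : ℕ) :
    B ^ m - A ^ m = ∑ i ∈ Finset.range m, B ^ i * (B - A) * A ^ (m - 1 - i) := by
  induction m with
  | zero => simp
  | succ m ih =>
    rw [Finset.sum_range_succ]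
    have h1 : ∀ i ∈ Finset.range m, B ^ i * (B - A) * A ^ (m + 1 - 1 - i)
        = (B ^ i * (B - A) * A ^ (m - 1 - i)) * A := by
      intro i hi
      rw [mul_assoc, mul_assoc, ← pow_succ]
      have : m - 1 - i + 1 = m + 1 - 1 - i := by
        simp only [Finset.mem_range] at hi; omega
      rw [this, ← mul_assoc]
    rw [Finset.sum_congr rfl h1, ← Finset.sum_mul, ← ih]
    have h0 : m + 1 - 1 - m = 0 := by omega
    rw [h0, pow_zero, mul_one, pow_succ, pow_succ]
    noncomm_ring

lemma l2norm_one_le : ‖(1 : Matrix n n ℂ)‖ ≤ 1 := by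
  rw [Matrix.l2_opNorm_def]
  have h : (Matrix.toEuclideanLin (𝕜 := ℂ) (m := n) (n := n)).trans
      LinearMap.toContinuousLinearMap (1 : Matrix n n ℂ) = ContinuousLinearMap.id ℂ _ := by
    ext x
    show ((1 : Matrix n n ℂ) *ᵥ _) _ = _
    rw [one_mulVec]
    rfl
  rw [h]
  exact ContinuousLinearMap.norm_id_le

lemma l2norm_pow_le (H : Matrix n n ℂ) {C : ℝ} (h : ‖H‖ ≤ C) (s : ℕ) : ‖H ^ s‖ ≤ C ^ s := by
  have hC : 0 ≤ C := le_trans (norm_nonneg _) h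
  induction s with
  | zero => simpa using l2norm_one_le
  | succ s ih =>
    rw [pow_succ, pow_succ]
    exact le_trans (Matrix.l2_opNorm_mul _ _) (mul_le_mul ih h (norm_nonneg _) (pow_nonneg hC _))

lemma monomial_sum_bound {A B : Matrix n n ℂ} (hA : A.IsHermitian) (hB : B.IsHermitian)
    {CA CE : ℝ} (hCA0 : 0 ≤ CA) (hCE0 : 0 ≤ CE)
    (hCA : ∀ j, |hA.eigenvalues j| ≤ CA) (hCE : ∀ j, |(hB.sub hA).eigenvalues j| ≤ CE) (m : ℕ) :
    |∑ j, (hB.eigenvalues j) ^ m - ∑ j, (hA.eigenvalues j) ^ m|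
      ≤ (m : ℝ) * ((B - A).rank : ℝ) * CE * (CA + CE) ^ (m - 1) := by
  have hnA : ‖A‖ ≤ CA := herm_norm_le hA hCA0 hCA
  have hnE : ‖B - A‖ ≤ CE := herm_norm_le (hB.sub hA) hCE0 hCE
  have hnB : ‖B‖ ≤ CA + CE := by
    calc ‖B‖ = ‖A + (B - A)‖ := by rw [add_sub_cancel]
      _ ≤ ‖A‖ + ‖B - A‖ := norm_add_le _ _
      _ ≤ CA + CE := add_le_add hnA hnE
  set x : ℝ := ∑ j, (hB.eigenvalues j) ^ m - ∑ j, (hA.eigenvalues j) ^ m with hxdef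
  have hx : (x : ℂ) = (B ^ m - A ^ m).trace := by
    rw [trace_sub, herm_trace_pow hB m, herm_trace_pow hA m, hxdef]
    push_cast
    ring
  have key : ∀ i ∈ Finset.range m, ‖(B ^ i * (B - A) * A ^ (m - 1 - i)).trace‖
      ≤ ((B - A).rank : ℝ) * CE * (CA + CE) ^ (m - 1) := by
    intro i hi
    rw [Finset.mem_range] at hi
    rw [trace_mul_cycle]
    refine le_trans (trace_mul_herm_le (hB.sub hA) hCE (A ^ (m - 1 - i) * B ^ i)) ?_
    apply mul_le_mul_of_nonneg_left _ (mul_nonneg (Nat.cast_nonneg _) hCE0)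
    calc ‖A ^ (m - 1 - i) * B ^ i‖ ≤ ‖A ^ (m - 1 - i)‖ * ‖B ^ i‖ := Matrix.l2_opNorm_mul _ _
      _ ≤ CA ^ (m - 1 - i) * (CA + CE) ^ i :=
          mul_le_mul (l2norm_pow_le A hnA _) (l2norm_pow_le B hnB _) (norm_nonneg _)
            (pow_nonneg hCA0 _)
      _ ≤ (CA + CE) ^ (m - 1 - i) * (CA + CE) ^ i := by
          apply mul_le_mul_of_nonneg_right _ (pow_nonneg (by linarith) _)
          exact pow_le_pow_left₀ hCA0 (by linarith) _
      _ = (CA + CE) ^ (m - 1) := by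
          rw [← pow_add]
          congr 1
          omega
  calc |x| = ‖(x : ℂ)‖ := by rw [Complex.norm_real, Real.norm_eq_abs]
    _ = ‖∑ i ∈ Finset.range m, (B ^ i * (B - A) * A ^ (m - 1 - i)).trace‖ := by
        rw [hx, pow_sub_pow_eq, trace_sum]
    _ ≤ ∑ i ∈ Finset.range m, ‖(B ^ i * (B - A) * A ^ (m - 1 - i)).trace‖ := norm_sum_le _ _
    _ ≤ ∑ _i ∈ Finset.range m, ((B - A).rank : ℝ) * CE * (CA + CE) ^ (m - 1) :=
        Finset.sum_le_sum key
    _ = (m : ℝ) * ((B - A).rank : ℝ) * CE * (CA + CE) ^ (m - 1) := by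
        rw [Finset.sum_const, Finset.card_range, nsmul_eq_mul]
        ring

end Helpers

/-- `{A n}` is distributed, in the sense of the eigenvalues, as the function `f`
over the set `D` (Weyl eigenvalue distribution). -/
def EigDistributed {d : ℕ → ℕ} (A : ∀ n, Matrix (Fin (d n)) (Fin (d n)) ℂ)
    (hA : ∀ n, (A n).IsHermitian) {k : ℕ} (D : Set (Fin k → ℝ))
    (f : (Fin k → ℝ) → ℝ) : Prop :=
  ∀ F : ℝ → ℝ, Continuous F → HasCompactSupport F →
    Tendsto (fun n => (1 / (d n : ℝ)) * ∑ j, F ((hA n).eigenvalues j)) atTop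
      (nhds ((volume D).toReal⁻¹ * ∫ t in D, F (f t)))

/-- Low-rank, uniformly bounded perturbations do not change the eigenvalue
distribution of a sequence of Hermitian matrices. -/
theorem eig_distribution_low_rank_perturbation (d : ℕ → ℕ)
    (hd : Tendsto d atTop atTop)
    (A B : ∀ n, Matrix (Fin (d n)) (Fin (d n)) ℂ)
    (hA : ∀ n, (A n).IsHermitian) (hB : ∀ n, (B n).IsHermitian)
    {k : ℕ} (D : Set (Fin k → ℝ)) (hD : MeasurableSet D)
    (hD0 : volume D ≠ 0) (hDfin : volume D ≠ ⊤)
    (f : (Fin k → ℝ) → ℝ) (hfmeas : Measurable f) (hfbd : ∃ C, ∀ t, |f t| ≤ C)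
    (hdist : EigDistributed A hA D f)
    (hAbd : ∃ C, ∀ n j, |(hA n).eigenvalues j| ≤ C)
    (hrank : Tendsto (fun n => ((B n - A n).rank : ℝ) / (d n : ℝ)) atTop (nhds 0))
    (hdiffbd : ∃ C, ∀ n j, |((hB n).sub (hA n)).eigenvalues j| ≤ C) :
    EigDistributed B hB D f := by
  classical
  obtain ⟨Cf0, hCf⟩ := hfbd
  obtain ⟨CA0, hCA⟩ := hAbd
  obtain ⟨CE0, hCE⟩ := hdiffbd
  set CA : ℝ := max CA0 0 with hCAdef
  set CE : ℝ := max CE0 0 with hCEdef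
  set Cf : ℝ := max Cf0 0 with hCfdef
  have hCA0 : 0 ≤ CA := le_max_right _ _
  have hCE0 : 0 ≤ CE := le_max_right _ _
  have hCf0 : 0 ≤ Cf := le_max_right _ _
  have hCA' : ∀ n j, |(hA n).eigenvalues j| ≤ CA :=
    fun n j => le_trans (hCA n j) (le_max_left _ _)
  have hCE' : ∀ n j, |((hB n).sub (hA n)).eigenvalues j| ≤ CE :=
    fun n j => le_trans (hCE n j) (le_max_left _ _)
  have hCf' : ∀ t, |f t| ≤ Cf := fun t => le_trans (hCf t) (le_max_left _ _)
  set M : ℝ := CA + CE + Cf with hMdef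
  have hM0 : 0 ≤ M := by positivity
  have hMA : ∀ n j, |(hA n).eigenvalues j| ≤ M := fun n j => by
    have := hCA' n j; simp only [hMdef]; linarith
  have hnA : ∀ n, ‖A n‖ ≤ CA := fun n => herm_norm_le (hA n) hCA0 (hCA' n)
  have hnE : ∀ n, ‖B n - A n‖ ≤ CE := fun n => herm_norm_le ((hB n).sub (hA n)) hCE0 (hCE' n)
  have hMB : ∀ n j, |(hB n).eigenvalues j| ≤ M := by
    intro n j
    calc |(hB n).eigenvalues j| ≤ ‖B n‖ := herm_eig_le_norm (hB n) j
      _ = ‖A n + (B n - A n)‖ := by rw [add_sub_cancel]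
      _ ≤ ‖A n‖ + ‖B n - A n‖ := norm_add_le _ _
      _ ≤ CA + CE := add_le_add (hnA n) (hnE n)
      _ ≤ M := by simp only [hMdef]; linarith
  have hMf : ∀ t, f t ∈ Set.Icc (-M) M := fun t => by
    have := hCf' t
    constructor <;> [skip; skip] <;> (rw [abs_le] at this; simp only [hMdef]) <;>
      [linarith [this.1]; linarith [this.2]]
  have hvol : 0 < (volume D).toReal := ENNReal.toReal_pos hD0 hDfin
  -- per-monomial convergence
  have hterm : ∀ m : ℕ, Tendsto (fun n => (1 / (d n : ℝ)) *
      (∑ j, ((hB n).eigenvalues j) ^ m - ∑ j, ((hA n).eigenvalues j) ^ m)) atTop (nhds 0) := by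
    intro m
    apply squeeze_zero_norm (a := fun n =>
      ((m : ℝ) * CE * (CA + CE) ^ (m - 1)) * (((B n - A n).rank : ℝ) / (d n : ℝ)))
    · intro n
      rw [Real.norm_eq_abs, abs_mul, abs_of_nonneg (by positivity : (0:ℝ) ≤ 1 / (d n : ℝ))]
      calc (1 / (d n : ℝ)) * |∑ j, ((hB n).eigenvalues j) ^ m - ∑ j, ((hA n).eigenvalues j) ^ m|
          ≤ (1 / (d n : ℝ)) * ((m : ℝ) * (((B n - A n)).rank : ℝ) * CE * (CA + CE) ^ (m - 1)) :=
            mul_le_mul_of_nonneg_left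
              (monomial_sum_bound (hA n) (hB n) hCA0 hCE0 (hCA' n) (hCE' n) m)
              (by positivity)
        _ = ((m : ℝ) * CE * (CA + CE) ^ (m - 1)) * (((B n - A n).rank : ℝ) / (d n : ℝ)) := by
            ring
    · simpa using hrank.const_mul ((m : ℝ) * CE * (CA + CE) ^ (m - 1))
  -- main argument
  intro F hFcont hFsupp
  rw [Metric.tendsto_nhds]
  intro ε hε
  obtain ⟨p, hp⟩ := exists_polynomial_near_of_continuousOn (-M) M F hFcont.continuousOn
    (ε / 4) (by linarith)
  set χ : ℝ → ℝ := fun x => max 0 (min 1 (M + 1 - |x|)) with hχdef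
  have hχcont : Continuous χ :=
    continuous_const.max (continuous_const.min (continuous_const.sub continuous_abs))
  set q : ℝ → ℝ := fun x => p.eval x * χ x with hqdef
  have hqcont : Continuous q := (p.continuous_aeval.mul hχcont)
  have hqsupp : HasCompactSupport q := by
    apply HasCompactSupport.intro (isCompact_Icc (a := -(M+1)) (b := M+1))
    intro x hx
    have hxabs : M + 1 < |x| := by
      rcases abs_cases x with ⟨h1, _⟩ | ⟨h1, _⟩ <;>
        (simp only [Set.mem_Icc, not_and_or, not_le] at hx; rcases hx with h | h <;> linarith)
    have : χ x = 0 := by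
      simp only [hχdef]
      rw [max_eq_left]
      exact le_trans (min_le_right _ _) (by linarith)
    simp [hqdef, this]
  have hq_eq : ∀ x, |x| ≤ M → q x = p.eval x := by
    intro x hx
    have : χ x = 1 := by
      simp only [hχdef]
      rw [min_eq_left (by linarith), max_eq_right (by linarith)]
    simp [hqdef, this]
  -- the A-sequence limit for q
  have hSa := hdist q hqcont hqsupp
  -- difference of q-sums tends to zero
  have hdiffq : ∀ n, (1 / (d n : ℝ)) * ∑ j, q ((hB n).eigenvalues j)
      - (1 / (d n : ℝ)) * ∑ j, q ((hA n).eigenvalues j)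
      = ∑ m ∈ Finset.range (p.natDegree + 1), p.coeff m * ((1 / (d n : ℝ)) *
        (∑ j, ((hB n).eigenvalues j) ^ m - ∑ j, ((hA n).eigenvalues j) ^ m)) := by
    intro n
    have eB : ∀ j : Fin (d n), q ((hB n).eigenvalues j)
        = ∑ m ∈ Finset.range (p.natDegree + 1), p.coeff m * ((hB n).eigenvalues j) ^ m := by
      intro j
      rw [hq_eq _ (hMB n j), Polynomial.eval_eq_sum_range]
    have eA : ∀ j : Fin (d n), q ((hA n).eigenvalues j)
        = ∑ m ∈ Finset.range (p.natDegree + 1), p.coeff m * ((hA n).eigenvalues j) ^ m := by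
      intro j
      rw [hq_eq _ (hMA n j), Polynomial.eval_eq_sum_range]
    rw [Finset.sum_congr rfl (fun j _ => eB j), Finset.sum_congr rfl (fun j _ => eA j),
      Finset.sum_comm, Finset.sum_comm (f := fun (j : Fin (d n)) m => p.coeff m * ((hA n).eigenvalues j) ^ m)]
    rw [← mul_sub, ← Finset.sum_sub_distrib, Finset.mul_sum]
    apply Finset.sum_congr rfl
    intro m _
    rw [← Finset.mul_sum, ← Finset.mul_sum]
    ring
  have hG : Tendsto (fun n => (1 / (d n : ℝ)) * ∑ j, q ((hB n).eigenvalues j)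
      - (1 / (d n : ℝ)) * ∑ j, q ((hA n).eigenvalues j)) atTop (nhds 0) := by
    rw [funext hdiffq, show (0:ℝ) = ∑ m ∈ Finset.range (p.natDegree + 1), (0:ℝ) by simp]
    exact tendsto_finset_sum _ (fun m _ => by simpa using (hterm m).const_mul (p.coeff m))
  -- F-sum vs q-sum for B
  have hclose : ∀ n, |(1 / (d n : ℝ)) * ∑ j, F ((hB n).eigenvalues j)
      - (1 / (d n : ℝ)) * ∑ j, q ((hB n).eigenvalues j)| ≤ ε / 4 := by
    intro n
    rw [← mul_sub, ← Finset.sum_sub_distrib, abs_mul,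
      abs_of_nonneg (by positivity : (0:ℝ) ≤ 1 / (d n : ℝ))]
    have hsum : |∑ j, (F ((hB n).eigenvalues j) - q ((hB n).eigenvalues j))|
        ≤ (d n : ℝ) * (ε / 4) := by
      refine le_trans (Finset.abs_sum_le_sum_abs _ _) ?_
      have : ∀ j : Fin (d n), |F ((hB n).eigenvalues j) - q ((hB n).eigenvalues j)| ≤ ε / 4 := by
        intro j
        rw [hq_eq _ (hMB n j), abs_sub_comm]
        exact le_of_lt (hp _ (Set.mem_Icc.2 (abs_le.1 (hMB n j))))
      refine le_trans (Finset.sum_le_card_nsmul _ _ (ε / 4) (fun j _ => this j)) ?_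
      simp [nsmul_eq_mul]
    rcases Nat.eq_zero_or_pos (d n) with h0 | h0
    · simp [h0]
      positivity
    · calc (1 / (d n : ℝ)) * |∑ j, (F ((hB n).eigenvalues j) - q ((hB n).eigenvalues j))|
          ≤ (1 / (d n : ℝ)) * ((d n : ℝ) * (ε / 4)) :=
            mul_le_mul_of_nonneg_left hsum (by positivity)
        _ = ε / 4 := by
            rw [← mul_assoc, one_div_mul_cancel (by exact_mod_cast h0.ne' : (d n : ℝ) ≠ 0), one_mul]
  -- limits: q-limit vs F-limit
  have hqi : Integrable (fun t => q (f t)) (volume.restrict D) := by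
    obtain ⟨Kq, hKq⟩ := (isCompact_Icc (a := -M) (b := M)).exists_bound_of_continuousOn
      hqcont.continuousOn
    refine Integrable.mono' (g := fun _ => Kq) (integrableOn_const hDfin)
      ((hqcont.measurable.comp hfmeas).aestronglyMeasurable) (ae_of_all _ fun t => hKq _ (hMf t))
  have hFi : Integrable (fun t => F (f t)) (volume.restrict D) := by
    obtain ⟨KF, hKF⟩ := (isCompact_Icc (a := -M) (b := M)).exists_bound_of_continuousOn
      hFcont.continuousOn
    refine Integrable.mono' (g := fun _ => KF) (integrableOn_const hDfin)
      ((hFcont.measurable.comp hfmeas).aestronglyMeasurable) (ae_of_all _ fun t => hKF _ (hMf t))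
  have hLdiff : |(volume D).toReal⁻¹ * (∫ t in D, q (f t))
      - (volume D).toReal⁻¹ * (∫ t in D, F (f t))| ≤ ε / 4 := by
    rw [← mul_sub, ← integral_sub hqi hFi, abs_mul,
      abs_of_nonneg (inv_nonneg.2 ENNReal.toReal_nonneg)]
    have hint : |∫ t in D, (q (f t) - F (f t))| ≤ (ε / 4) * (volume D).toReal := by
      rw [← Real.norm_eq_abs]
      apply norm_setIntegral_le_of_norm_le_const hDfin.lt_top
      · intro t ht
        rw [Real.norm_eq_abs, hq_eq _ (abs_le.2 ⟨(hMf t).1, (hMf t).2⟩)]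
        exact le_of_lt (hp _ (hMf t))
    calc (volume D).toReal⁻¹ * |∫ t in D, (q (f t) - F (f t))|
        ≤ (volume D).toReal⁻¹ * ((ε / 4) * (volume D).toReal) :=
          mul_le_mul_of_nonneg_left hint (by positivity)
      _ = ε / 4 := by
          rw [mul_comm (ε / 4), ← mul_assoc, inv_mul_cancel₀ hvol.ne', one_mul]
  -- assemble
  have key : ∀ a b c lq lf : ℝ, |a - b| ≤ ε / 4 → |b - c| < ε / 4 → |c - lq| < ε / 4 →
      |lq - lf| ≤ ε / 4 → |a - lf| < ε := by
    intro a b c lq lf k1 k2 k3 k4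
    have t1 := abs_sub_le a c lf
    have t2 := abs_sub_le a b c
    have t3 := abs_sub_le c lq lf
    linarith
  have hev1 := (Metric.tendsto_nhds.1 hSa) (ε / 4) (by linarith)
  have hev2 := (Metric.tendsto_nhds.1 hG) (ε / 4) (by linarith)
  filter_upwards [hev1, hev2] with m h1 h2
  rw [Real.dist_eq] at h1 ⊢
  rw [Real.dist_eq, sub_zero] at h2
  exact key _ _ _ _ _ (hclose m) h2 h1 hLdiff
end

section
/- Let {A_n} be a sequence of Hermitian matrices of size d_n → ∞ whose eigenvalues satisfy: for each n, at most r_n eigenvalues are nonzero with r_n/d_n → 0, and all eigenvalues are bounded in absolute value by a constant C. Let {B_n} be Hermitian of size d_n distributed as (f,D). Then {A_n + B_n} is distributed as (f,D) in the sense of eigenvalues. -/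
open Matrix Filter MeasureTheory Finset

noncomputable def quad {n : ℕ} (M : Matrix (Fin n) (Fin n) ℂ) (x : EuclideanSpace ℂ (Fin n)) : ℝ :=
  Complex.re (inner (𝕜 := ℂ) x (Matrix.toEuclideanLin M x))

lemma toEuclideanLin_eigenvectorBasis {n : ℕ} {M : Matrix (Fin n) (Fin n) ℂ}
    (hM : M.IsHermitian) (i : Fin n) :
    Matrix.toEuclideanLin M (hM.eigenvectorBasis i) = (hM.eigenvalues i : ℂ) • hM.eigenvectorBasis i := by
  ext j
  have := congrFun (hM.mulVec_eigenvectorBasis i) j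
  simpa [Matrix.toEuclideanLin_apply] using this

lemma quad_sum {n : ℕ} {M : Matrix (Fin n) (Fin n) ℂ} (hM : M.IsHermitian)
    (c : Fin n → ℂ) :
    quad M (∑ i, c i • hM.eigenvectorBasis i) = ∑ i, hM.eigenvalues i * ‖c i‖ ^ 2 := by
  set b := hM.eigenvectorBasis with hb
  have hT : Matrix.toEuclideanLin M (∑ i, c i • b i)
      = ∑ i, ((hM.eigenvalues i : ℂ) * c i) • b i := by
    rw [map_sum]
    refine Finset.sum_congr rfl fun i _ => ?_
    rw [LinearMap.map_smul, toEuclideanLin_eigenvectorBasis hM i, smul_smul, mul_comm]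
  rw [quad, hT, b.orthonormal.inner_sum, Complex.re_sum]
  refine Finset.sum_congr rfl fun i _ => ?_
  have : (starRingEnd ℂ) (c i) * ((hM.eigenvalues i : ℂ) * c i)
      = ((hM.eigenvalues i * ‖c i‖ ^ 2 : ℝ) : ℂ) := by
    rw [mul_left_comm, RCLike.conj_mul]
    norm_cast
    exact (RCLike.ofReal_mul _ _).symm
  rw [this, Complex.ofReal_re]

lemma quad_eq_sum {n : ℕ} {M : Matrix (Fin n) (Fin n) ℂ} (hM : M.IsHermitian)
    (x : EuclideanSpace ℂ (Fin n)) :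
    quad M x = ∑ i, hM.eigenvalues i * ‖hM.eigenvectorBasis.repr x i‖ ^ 2 := by
  conv_lhs => rw [← hM.eigenvectorBasis.sum_repr x]
  exact quad_sum hM _

lemma norm_sq_eq_sum {n : ℕ} (b : OrthonormalBasis (Fin n) ℂ (EuclideanSpace ℂ (Fin n)))
    (x : EuclideanSpace ℂ (Fin n)) :
    ‖x‖ ^ 2 = ∑ i, ‖b.repr x i‖ ^ 2 := by
  rw [← b.repr.norm_map x, EuclideanSpace.norm_eq]
  rw [Real.sq_sqrt (by positivity)]

lemma repr_eq_zero_of_mem_span {n : ℕ} (b : OrthonormalBasis (Fin n) ℂ (EuclideanSpace ℂ (Fin n)))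
    (s : Finset (Fin n)) {x : EuclideanSpace ℂ (Fin n)}
    (hx : x ∈ Submodule.span ℂ (b '' ↑s)) {i : Fin n} (hi : i ∉ s) :
    b.repr x i = 0 := by
  rw [b.repr_apply_apply]
  induction hx using Submodule.span_induction with
  | mem y hy =>
    obtain ⟨j, hj, rfl⟩ := hy
    have : i ≠ j := fun h => hi (h ▸ hj)
    simpa [orthonormal_iff_ite.mp b.orthonormal, this] using (if_neg this) ▸ rfl
  | zero => simp
  | add y z _ _ hy hz => rw [inner_add_right, hy, hz, add_zero]
  | smul c y _ hy => rw [inner_smul_right, hy, mul_zero]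

lemma finrank_span_orthonormal {n : ℕ} (b : OrthonormalBasis (Fin n) ℂ (EuclideanSpace ℂ (Fin n)))
    (s : Finset (Fin n)) :
    Module.finrank ℂ (Submodule.span ℂ (b '' ↑s)) = s.card := by
  have hli : LinearIndependent ℂ (fun i : ↥s => b i) :=
    b.orthonormal.linearIndependent.comp _ Subtype.val_injective
  rw [show (⇑b '' ↑s : Set _) = Set.range (fun i : ↥s => b i) from
        (Set.image_eq_range _ _), finrank_span_eq_card hli, Fintype.card_coe]

lemma finrank_le_count {n : ℕ} {M : Matrix (Fin n) (Fin n) ℂ} (hM : M.IsHermitian) (t : ℝ)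
    (V : Submodule ℂ (EuclideanSpace ℂ (Fin n)))
    (hV : ∀ x ∈ V, x ≠ 0 → t * ‖x‖ ^ 2 < quad M x) :
    Module.finrank ℂ V ≤ (univ.filter fun i => t < hM.eigenvalues i).card := by
  classical
  by_contra h
  push_neg at h
  set b := hM.eigenvectorBasis with hbdef
  set s := univ.filter fun i => t < hM.eigenvalues i with hs
  set W := Submodule.span ℂ (⇑b '' ↑sᶜ) with hW
  have hWrank : Module.finrank ℂ W = sᶜ.card := finrank_span_orthonormal b sᶜ
  have hcard : s.card + sᶜ.card = n := by
    rw [Finset.card_add_card_compl]; simp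
  have hsup : Module.finrank ℂ (V ⊔ W : Submodule ℂ _) ≤ n := by
    refine le_trans (Submodule.finrank_le _) ?_
    simp [finrank_euclideanSpace]
  have heq := Submodule.finrank_sup_add_finrank_inf_eq V W
  have hpos : 0 < Module.finrank ℂ ↥(V ⊓ W) := by omega
  obtain ⟨⟨x, hxmem⟩, hx0⟩ := Module.finrank_pos_iff_exists_ne_zero.mp hpos
  have hx0' : x ≠ 0 := fun h => hx0 (by simpa using h)
  have hxV : x ∈ V := hxmem.1
  have hxW : x ∈ W := hxmem.2
  have hlt := hV x hxV hx0'
  have hle : quad M x ≤ t * ‖x‖ ^ 2 := by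
    rw [quad_eq_sum hM x, norm_sq_eq_sum b x, Finset.mul_sum]
    refine Finset.sum_le_sum fun i _ => ?_
    by_cases hi : i ∈ s
    · have : b.repr x i = 0 := repr_eq_zero_of_mem_span b sᶜ hxW (by simpa using hi)
      rw [hbdef] at this ⊢
      simp [this]
    · have : hM.eigenvalues i ≤ t := by
        simpa [hs] using hi
      exact mul_le_mul_of_nonneg_right this (by positivity)
  linarith

lemma count_perturb {n : ℕ} {M N : Matrix (Fin n) (Fin n) ℂ}
    (hM : M.IsHermitian) (hN : N.IsHermitian)
    (W : Submodule ℂ (EuclideanSpace ℂ (Fin n)))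
    (hW : ∀ x ∈ W, Matrix.toEuclideanLin M x = Matrix.toEuclideanLin N x)
    (r : ℕ) (hr : n ≤ Module.finrank ℂ W + r) (t : ℝ) :
    (univ.filter fun i => t < hM.eigenvalues i).card
      ≤ (univ.filter fun i => t < hN.eigenvalues i).card + r := by
  classical
  set b := hM.eigenvectorBasis with hbdef
  set s := univ.filter fun i => t < hM.eigenvalues i with hs
  set VM := Submodule.span ℂ (⇑b '' ↑s) with hVM
  have hVMrank : Module.finrank ℂ VM = s.card := finrank_span_orthonormal b s
  have hVMprop : ∀ x ∈ VM, x ≠ 0 → t * ‖x‖ ^ 2 < quad M x := by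
    intro x hx hx0
    have hrepr0 : b.repr x ≠ 0 := fun h => hx0 (by
      have := b.repr.injective (by simpa using h : b.repr x = b.repr 0)
      simpa using this)
    obtain ⟨i0, hi0⟩ : ∃ i, b.repr x i ≠ 0 := by
      by_contra hc; push_neg at hc; exact hrepr0 (PiLp.ext fun i => by simp [hc i])
    have hi0s : i0 ∈ s := by
      by_contra hi0s
      exact hi0 (repr_eq_zero_of_mem_span b s hx hi0s)
    rw [quad_eq_sum hM x, norm_sq_eq_sum b x, Finset.mul_sum]
    refine Finset.sum_lt_sum (fun i _ => ?_) ⟨i0, Finset.mem_univ i0, ?_⟩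
    · by_cases hi : i ∈ s
      · have : t < hM.eigenvalues i := by simpa [hs] using hi
        exact mul_le_mul_of_nonneg_right this.le (by positivity)
      · have : b.repr x i = 0 := repr_eq_zero_of_mem_span b s hx hi
        rw [hbdef] at this ⊢
        simp [this]
    · have h1 : t < hM.eigenvalues i0 := by simpa [hs] using hi0s
      have h2 : (0:ℝ) < ‖b.repr x i0‖ ^ 2 := pow_pos (norm_pos_iff.mpr hi0) 2
      exact mul_lt_mul_of_pos_right h1 h2
  have key : ∀ x ∈ VM ⊓ W, x ≠ 0 → t * ‖x‖ ^ 2 < quad N x := by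
    intro x hx hx0
    have : quad N x = quad M x := by rw [quad, quad, hW x hx.2]
    rw [this]
    exact hVMprop x hx.1 hx0
  have h1 := finrank_le_count hN t (VM ⊓ W) key
  have heq := Submodule.finrank_sup_add_finrank_inf_eq VM W
  have hsup : Module.finrank ℂ (VM ⊔ W : Submodule ℂ _) ≤ n := by
    refine le_trans (Submodule.finrank_le _) ?_
    simp [finrank_euclideanSpace]
  omega

lemma exists_kernel_subspace {n : ℕ} {A : Matrix (Fin n) (Fin n) ℂ} (hA : A.IsHermitian)
    (r : ℕ) (hr : Set.ncard {j | hA.eigenvalues j ≠ 0} ≤ r) :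
    ∃ W : Submodule ℂ (EuclideanSpace ℂ (Fin n)),
      (∀ x ∈ W, Matrix.toEuclideanLin A x = 0) ∧ n ≤ Module.finrank ℂ W + r := by
  classical
  set s := univ.filter fun i => hA.eigenvalues i = 0 with hs
  refine ⟨Submodule.span ℂ (⇑hA.eigenvectorBasis '' ↑s), ?_, ?_⟩
  · intro x hx
    induction hx using Submodule.span_induction with
    | mem y hy =>
      obtain ⟨j, hj, rfl⟩ := hy
      rw [toEuclideanLin_eigenvectorBasis hA j]
      have : hA.eigenvalues j = 0 := by simpa [hs] using hj
      simp [this]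
    | zero => simp
    | add y z _ _ hy hz => rw [map_add, hy, hz, add_zero]
    | smul c y _ hy => rw [LinearMap.map_smul, hy, smul_zero]
  · rw [finrank_span_orthonormal]
    have hc : sᶜ = univ.filter fun i => hA.eigenvalues i ≠ 0 := by
      simp [hs, Finset.compl_filter]
    have hcount : sᶜ.card ≤ r := by
      rw [hc]
      have : {j | hA.eigenvalues j ≠ 0}.ncard
          = (univ.filter fun i => hA.eigenvalues i ≠ 0).card := by
        rw [Set.ncard_eq_toFinset_card']
        congr 1
        ext i
        simp
      omega
    have htot := Finset.card_add_card_compl s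
    simp only [Fintype.card_fin] at htot
    omega

lemma count_comparison {n : ℕ} {A B : Matrix (Fin n) (Fin n) ℂ}
    (hA : A.IsHermitian) (hB : B.IsHermitian) (r : ℕ)
    (hr : Set.ncard {j | hA.eigenvalues j ≠ 0} ≤ r) (t : ℝ) :
    (univ.filter fun i => t < (hA.add hB).eigenvalues i).card
      ≤ (univ.filter fun i => t < hB.eigenvalues i).card + r
    ∧ (univ.filter fun i => t < hB.eigenvalues i).card
      ≤ (univ.filter fun i => t < (hA.add hB).eigenvalues i).card + r := by
  obtain ⟨W, hW0, hWr⟩ := exists_kernel_subspace hA r hr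
  have hW : ∀ x ∈ W, Matrix.toEuclideanLin (A + B) x = Matrix.toEuclideanLin B x := by
    intro x hx
    rw [map_add (Matrix.toEuclideanLin), LinearMap.add_apply, hW0 x hx, zero_add]
  exact ⟨count_perturb (hA.add hB) hB W hW r hWr t,
    count_perturb hB (hA.add hB) W (fun x hx => (hW x hx).symm) r hWr t⟩



lemma cell_card_eq {m : ℕ} (x : Fin m → ℝ) {δ : ℝ} (hδ : 0 < δ) (i : ℤ) :
    ((univ.filter fun j => ⌈x j / δ⌉ = i).card : ℝ)
      = ((univ.filter fun j => δ * ((i:ℝ) - 1) < x j).card : ℝ)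
        - ((univ.filter fun j => δ * (i:ℝ) < x j).card : ℝ) := by
  classical
  have hsub : (univ.filter fun j => δ * (i:ℝ) < x j)
      ⊆ (univ.filter fun j => δ * ((i:ℝ) - 1) < x j) := by
    intro j hj
    simp only [mem_filter, mem_univ, true_and] at hj ⊢
    nlinarith
  have hset : (univ.filter fun j => ⌈x j / δ⌉ = i)
      = (univ.filter fun j => δ * ((i:ℝ) - 1) < x j) \ (univ.filter fun j => δ * (i:ℝ) < x j) := by
    ext j
    rw [Finset.mem_sdiff]
    simp only [mem_filter, mem_univ, true_and, mem_sdiff, not_lt]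
    rw [Int.ceil_eq_iff]
    constructor
    · rintro ⟨h1, h2⟩
      constructor
      · calc δ * ((i:ℝ) - 1) < δ * (x j / δ) := by
              exact mul_lt_mul_of_pos_left h1 hδ
            _ = x j := by field_simp
      · calc x j = δ * (x j / δ) := by field_simp
            _ ≤ δ * i := mul_le_mul_of_nonneg_left h2 hδ.le
    · rintro ⟨h1, h2⟩
      constructor
      · rw [lt_div_iff₀ hδ]
        linarith [mul_comm δ ((i:ℝ) - 1)]
      · rw [div_le_iff₀ hδ]
        linarith [mul_comm δ (i:ℝ)]
  rw [hset, Finset.card_sdiff_of_subset hsub]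
  rw [Nat.cast_sub (Finset.card_le_card hsub)]

lemma sum_step_eq {m : ℕ} (x : Fin m → ℝ) {δ : ℝ} (F : ℝ → ℝ)
    (I : Finset ℤ) (hI : ∀ i : ℤ, i ∉ I → F (δ * i) = 0) :
    ∑ j, F (δ * ⌈x j / δ⌉)
      = ∑ i ∈ I, F (δ * i) * ((univ.filter fun j => ⌈x j / δ⌉ = i).card : ℝ) := by
  classical
  have key : ∀ j, F (δ * ⌈x j / δ⌉) = ∑ i ∈ I, if ⌈x j / δ⌉ = i then F (δ * i) else 0 := by
    intro j
    rw [Finset.sum_ite_eq I (⌈x j / δ⌉) (fun i => F (δ * i))]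
    by_cases h : ⌈x j / δ⌉ ∈ I
    · simp [h]
    · simp [h, hI _ h]
  simp_rw [key]
  rw [Finset.sum_comm]
  refine Finset.sum_congr rfl fun i _ => ?_
  rw [← Finset.sum_filter]
  rw [Finset.sum_const, nsmul_eq_mul, mul_comm]

lemma abs_sum_sub_sum_le {m : ℕ} (μ ν : Fin m → ℝ) (r : ℕ)
    (hcount : ∀ t : ℝ, |((univ.filter fun j => t < μ j).card : ℝ)
        - ((univ.filter fun j => t < ν j).card : ℝ)| ≤ r)
    (F : ℝ → ℝ) (K : ℝ) (hK : ∀ x, |F x| ≤ K)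
    {δ : ℝ} (hδ : 0 < δ) (ε1 : ℝ) (hF : ∀ x y, |x - y| ≤ δ → |F x - F y| ≤ ε1)
    (I : Finset ℤ) (hI : ∀ i : ℤ, i ∉ I → F (δ * i) = 0) :
    |∑ j, F (μ j) - ∑ j, F (ν j)| ≤ m * ε1 + m * ε1 + I.card * (2 * K * r) := by
  classical
  set S : ℝ → ℝ := fun y => F (δ * ⌈y / δ⌉) with hS
  have hstep : ∀ y : ℝ, |F y - S y| ≤ ε1 := by
    intro y
    apply hF
    have h1 : y / δ ≤ (⌈y / δ⌉ : ℝ) := Int.le_ceil _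
    have h2 : (⌈y / δ⌉ : ℝ) < y / δ + 1 := Int.ceil_lt_add_one _
    have hy : δ * (y / δ) = y := by field_simp
    have h1' := mul_le_mul_of_nonneg_left h1 hδ.le
    have h2' := mul_lt_mul_of_pos_left h2 hδ
    rw [abs_le]
    constructor <;> nlinarith
  have hT1 : ∀ x : Fin m → ℝ, |∑ j, F (x j) - ∑ j, S (x j)| ≤ m * ε1 := by
    intro x
    rw [← Finset.sum_sub_distrib]
    refine le_trans (Finset.abs_sum_le_sum_abs _ _) ?_
    refine le_trans (Finset.sum_le_card_nsmul _ _ ε1 fun j _ => hstep (x j)) ?_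
    simp [nsmul_eq_mul]
  have hK0 : 0 ≤ K := le_trans (abs_nonneg _) (hK 0)
  have hT2 : |∑ j, S (μ j) - ∑ j, S (ν j)| ≤ I.card * (2 * K * r) := by
    rw [hS]
    simp only
    rw [sum_step_eq μ F I hI, sum_step_eq ν F I hI, ← Finset.sum_sub_distrib]
    refine le_trans (Finset.abs_sum_le_sum_abs _ _) ?_
    refine le_trans (Finset.sum_le_card_nsmul _ _ (2 * K * r) fun i _ => ?_) (by simp [nsmul_eq_mul])
    rw [← mul_sub, abs_mul]
    have hd : |((univ.filter fun j => ⌈μ j / δ⌉ = i).card : ℝ)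
        - ((univ.filter fun j => ⌈ν j / δ⌉ = i).card : ℝ)| ≤ 2 * r := by
      rw [cell_card_eq μ hδ i, cell_card_eq ν hδ i]
      have ha := hcount (δ * ((i:ℝ) - 1))
      have hb := hcount (δ * (i:ℝ))
      rw [abs_le] at ha hb ⊢
      constructor <;> [linarith [ha.1, hb.2]; linarith [ha.2, hb.1]]
    calc |F (δ * i)| * |_| ≤ K * (2 * r) := mul_le_mul (hK _) hd (abs_nonneg _) hK0
      _ = 2 * K * r := by ring
  calc |∑ j, F (μ j) - ∑ j, F (ν j)|
      ≤ |∑ j, F (μ j) - ∑ j, S (μ j)| + |∑ j, S (μ j) - ∑ j, S (ν j)|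
        + |∑ j, S (ν j) - ∑ j, F (ν j)| := by
        have := abs_sub_le (∑ j, F (μ j)) (∑ j, S (μ j)) (∑ j, F (ν j))
        have h2 := abs_sub_le (∑ j, S (μ j)) (∑ j, S (ν j)) (∑ j, F (ν j))
        linarith
    _ ≤ m * ε1 + I.card * (2 * K * r) + m * ε1 := by
        have := hT1 μ
        have h2 := hT1 ν
        rw [abs_sub_comm] at h2
        linarith
    _ = m * ε1 + m * ε1 + I.card * (2 * K * r) := by ring


/-- Adding a sequence of Hermitian matrices with few, uniformly bounded, nonzero
eigenvalues does not change the eigenvalue distribution. -/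
theorem eig_distribution_add_sparse (d : ℕ → ℕ) (hd : Tendsto d atTop atTop)
    (A B : ∀ n, Matrix (Fin (d n)) (Fin (d n)) ℂ)
    (hA : ∀ n, (A n).IsHermitian) (hB : ∀ n, (B n).IsHermitian)
    (r : ℕ → ℕ)
    (hsparse : ∀ n, Set.ncard {j | (hA n).eigenvalues j ≠ 0} ≤ r n)
    (hr : Tendsto (fun n => (r n : ℝ) / (d n : ℝ)) atTop (nhds 0))
    (C : ℝ) (hC : ∀ n j, |(hA n).eigenvalues j| ≤ C)
    {k : ℕ} (D : Set (Fin k → ℝ)) (f : (Fin k → ℝ) → ℝ)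
    (hdist : EigDistributed B hB D f) :
    EigDistributed (fun n => A n + B n) (fun n => (hA n).add (hB n)) D f := by
  intro F hFc hFs
  -- the difference of the two normalized traces tends to zero
  have key : Tendsto (fun n => (1 / (d n : ℝ)) *
      (∑ j, F (((hA n).add (hB n)).eigenvalues j) - ∑ j, F ((hB n).eigenvalues j)))
      atTop (nhds 0) := by
    -- bound on F
    obtain ⟨K0, hK0⟩ := (hFs.isCompact.image hFc.abs).bddAbove
    set K : ℝ := max K0 0 with hKdef
    have hK : ∀ x, |F x| ≤ K := by
      intro x
      by_cases hx : x ∈ tsupport F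
      · exact le_trans (hK0 (Set.mem_image_of_mem _ hx)) (le_max_left _ _)
      · rw [image_eq_zero_of_notMem_tsupport hx, abs_zero]
        exact le_max_right _ _
    have hKnn : 0 ≤ K := le_max_right _ _
    -- support radius
    obtain ⟨R, hR⟩ := hFs.isBounded.subset_closedBall 0
    have hRz : ∀ x : ℝ, R < |x| → F x = 0 := by
      intro x hx
      apply image_eq_zero_of_notMem_tsupport
      intro hmem
      have := hR hmem
      rw [Metric.mem_closedBall, Real.dist_eq, sub_zero] at this
      linarith
    -- uniform continuity
    have hUC : UniformContinuous F := hFs.uniformContinuous_of_continuous hFc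
    rw [Metric.tendsto_nhds]
    intro ε hε
    -- choose δ from uniform continuity
    obtain ⟨δ0, hδ0, hδ0p⟩ := Metric.uniformContinuous_iff.mp hUC (ε / 4) (by positivity)
    set δ : ℝ := δ0 / 2 with hδdef
    have hδ : 0 < δ := by positivity
    have hmod : ∀ x y : ℝ, |x - y| ≤ δ → |F x - F y| ≤ ε / 4 := by
      intro x y hxy
      have hlt : dist x y < δ0 := by
        rw [Real.dist_eq]; linarith
      exact le_of_lt (by simpa [Real.dist_eq] using hδ0p hlt)
    -- the index set
    set M : ℤ := ⌈R / δ⌉ + 1 with hMdef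
    set I : Finset ℤ := Finset.Icc (-M) M with hIdef
    have hMbound : R < δ * (M : ℝ) := by
      have h1 : R / δ ≤ (⌈R / δ⌉ : ℝ) := Int.le_ceil _
      have h2 : δ * (R / δ) = R := by field_simp
      push_cast [hMdef]
      nlinarith
    have hI : ∀ i : ℤ, i ∉ I → F (δ * i) = 0 := by
      intro i hi
      apply hRz
      rw [hIdef, Finset.mem_Icc, not_and_or, not_le, not_le] at hi
      rw [lt_abs]
      rcases hi with hi | hi
      · right
        have h1 : (i : ℝ) ≤ -(M : ℝ) := by exact_mod_cast hi.le
        nlinarith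
      · left
        have h1 : (M : ℝ) ≤ (i : ℝ) := by exact_mod_cast hi.le
        nlinarith
    -- constant
    set c : ℝ := (I.card : ℝ) * (2 * K) with hcdef
    clear hcdef hIdef hMdef hδdef hKdef
    have hcnn : 0 ≤ c := by positivity
    have hε' : 0 < ε / (4 * (c + 1)) := by positivity
    have hev1 : ∀ᶠ n in atTop, 1 ≤ d n := hd.eventually_ge_atTop 1
    have hev2 : ∀ᶠ n in atTop, (r n : ℝ) / (d n : ℝ) < ε / (4 * (c + 1)) := by
      have := Metric.tendsto_nhds.mp hr _ hε'
      simpa [Real.dist_eq] using this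
    filter_upwards [hev1, hev2] with n hn1 hn2
    have hdpos : (0:ℝ) < (d n : ℝ) := by exact_mod_cast Nat.lt_of_lt_of_le Nat.zero_lt_one hn1
    -- counting hypothesis
    have hcount : ∀ t : ℝ, |((univ.filter fun j => t < ((hA n).add (hB n)).eigenvalues j).card : ℝ)
        - ((univ.filter fun j => t < (hB n).eigenvalues j).card : ℝ)| ≤ (r n : ℝ) := by
      intro t
      obtain ⟨hc1, hc2⟩ := count_comparison (hA n) (hB n) (r n) (hsparse n) t
      have hc1' : ((univ.filter fun j => t < ((hA n).add (hB n)).eigenvalues j).card : ℝ)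
          ≤ ((univ.filter fun j => t < (hB n).eigenvalues j).card : ℝ) + (r n : ℝ) := by
        exact_mod_cast hc1
      have hc2' : ((univ.filter fun j => t < (hB n).eigenvalues j).card : ℝ)
          ≤ ((univ.filter fun j => t < ((hA n).add (hB n)).eigenvalues j).card : ℝ) + (r n : ℝ) := by
        exact_mod_cast hc2
      rw [abs_le]
      constructor <;> linarith
    have hsum := abs_sum_sub_sum_le ((hA n).add (hB n)).eigenvalues ((hB n)).eigenvalues (r n)
      hcount F K hK hδ (ε / 4) hmod I hI
    clear hcount
    set X := ∑ j, F (((hA n).add (hB n)).eigenvalues j) with hX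
    set Y := ∑ j, F ((hB n).eigenvalues j) with hY
    clear_value X Y
    clear hX hY
    rw [Real.dist_eq, sub_zero, abs_mul, abs_of_pos (by positivity : (0:ℝ) < 1 / (d n : ℝ))]
    have hrd : (0:ℝ) ≤ (r n : ℝ) / (d n : ℝ) := by positivity
    have hstep : (1 / (d n : ℝ)) * |X - Y|
        ≤ ε / 4 + ε / 4 + c * ((r n : ℝ) / (d n : ℝ)) := by
      have h1 : (1 / (d n : ℝ)) * ((d n : ℝ) * (ε / 4) + (d n : ℝ) * (ε / 4)
          + (I.card : ℝ) * (2 * K * (r n : ℝ)))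
          = ε / 4 + ε / 4 + c * ((r n : ℝ) / (d n : ℝ)) := by
        field_simp
        ring
      rw [← h1]
      apply mul_le_mul_of_nonneg_left hsum (by positivity)
    have hc1 : (0:ℝ) < c + 1 := by linarith
    have hlast : c * ((r n : ℝ) / (d n : ℝ)) ≤ ε / 4 :=
      calc c * ((r n : ℝ) / (d n : ℝ)) ≤ (c + 1) * (ε / (4 * (c + 1))) :=
            mul_le_mul (by linarith) hn2.le hrd (by linarith)
        _ = ε / 4 := by
            rw [eq_div_iff (by norm_num : (4:ℝ) ≠ 0)]
            field_simp
    linarith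
  have h2 := key.add (hdist F hFc hFs)
  rw [zero_add] at h2
  exact h2.congr fun n => by ring
end
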